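/- arXiv:2408.00807 — 2 statements merged into one kernel-verified Lean document; each statement's English description precedes it below -/
import Mathlib

section
/- For all positive integers n and m, and 0 < q < 1, the multiple sum over chains n ≥ i_1 ≥ i_2 ≥ ... ≥ i_m ≥ 1 of the product over j of q^{i_j}/(1 - q^{i_j}) equals the single sum over r from 1 to n of [n choose r]_q · (-1)^{r-1} q^{binom(r,2) + m r} / (1 - q^r)^m (Dilcher's identity). -/
noncomputable def qPoch (q a : ℝ) (n : ℕ) : ℝ := ∏ j ∈ Finset.range n, (1 - a * q ^ j)

noncomputable def qBinom (q : ℝ) (n r : ℕ) : ℝ :=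
  if r ≤ n then qPoch q q n / (qPoch q q r * qPoch q q (n - r)) else 0

/-- Multiple sum over chains `top ≥ i₁ ≥ ⋯ ≥ i_m ≥ 1` of `∏ q^{i_j}/(1-q^{i_j})`. -/
noncomputable def dSum (q : ℝ) : ℕ → ℕ → ℝ
  | 0, _ => 1
  | m + 1, top => ∑ i ∈ Finset.Icc 1 top, q ^ i / (1 - q ^ i) * dSum q m i

lemma qPoch_succ (q : ℝ) (k : ℕ) : qPoch q q (k+1) = qPoch q q k * (1 - q^(k+1)) := by
  rw [qPoch, Finset.prod_range_succ, ← qPoch]; ring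

lemma qPoch_zero (q : ℝ) : qPoch q q 0 = 1 := by simp [qPoch]

lemma qPoch_pos {q : ℝ} (hq0 : 0 < q) (hq1 : q < 1) (k : ℕ) : 0 < qPoch q q k := by
  unfold qPoch
  apply Finset.prod_pos
  intro j _
  have h : q * q ^ j < 1 := by
    have := pow_lt_one₀ hq0.le hq1 (Nat.succ_ne_zero j)
    rw [pow_succ] at this; linarith [this, mul_comm q (q^j)]
  linarith

lemma one_sub_pow_pos {q : ℝ} (hq0 : 0 < q) (hq1 : q < 1) (r : ℕ) (hr : r ≠ 0) :
    0 < 1 - q ^ r := by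
  have := pow_lt_one₀ hq0.le hq1 hr
  linarith

lemma qBinom_self {q : ℝ} (hq0 : 0 < q) (hq1 : q < 1) (n : ℕ) : qBinom q n n = 1 := by
  have h := (qPoch_pos hq0 hq1 n).ne'
  rw [qBinom, if_pos le_rfl, Nat.sub_self, qPoch_zero, mul_one, div_self h]

lemma qBinom_zero {q : ℝ} (hq0 : 0 < q) (hq1 : q < 1) (n : ℕ) : qBinom q n 0 = 1 := by
  have h := (qPoch_pos hq0 hq1 n).ne'
  rw [qBinom, if_pos (Nat.zero_le _), Nat.sub_zero, qPoch_zero, one_mul, div_self h]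

lemma qBinom_symm_id {q : ℝ} (hq0 : 0 < q) (hq1 : q < 1) (s n : ℕ) (hs : s ≤ n) :
    qBinom q (n+1) (s+1) * (1 - q^(s+1)) = qBinom q n s * (1 - q^(n+1)) := by
  have e1 : n + 1 - (s + 1) = n - s := by omega
  obtain ⟨k, rfl⟩ : ∃ k, n = s + k := ⟨n - s, by omega⟩
  have e2 : s + k - s = k := by omega
  rw [qBinom, qBinom, if_pos (by omega), if_pos (by omega), e1, e2,
    qPoch_succ q (s+k), qPoch_succ q s]
  have h1 := (qPoch_pos hq0 hq1 (s+k)).ne'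
  have h2 := (qPoch_pos hq0 hq1 s).ne'
  have h3 := (qPoch_pos hq0 hq1 k).ne'
  have h4 : (1:ℝ) - q^(s+1) ≠ 0 := (one_sub_pow_pos hq0 hq1 _ (by omega)).ne'
  field_simp

lemma qBinom_pascal {q : ℝ} (hq0 : 0 < q) (hq1 : q < 1) (s n : ℕ) (hs : s ≤ n) :
    qBinom q (n+1) (s+1) = qBinom q n (s+1) + q^(n-s) * qBinom q n s := by
  rcases eq_or_lt_of_le hs with rfl | hlt
  · have : qBinom q s (s+1) = 0 := by rw [qBinom, if_neg (by omega)]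
    rw [qBinom_self hq0 hq1, qBinom_self hq0 hq1, this, Nat.sub_self]
    ring
  · obtain ⟨k, rfl⟩ : ∃ k, n = s + k + 1 := ⟨n - s - 1, by omega⟩
    have e1 : s + k + 1 + 1 - (s + 1) = k + 1 := by omega
    have e2 : s + k + 1 - (s + 1) = k := by omega
    have e3 : s + k + 1 - s = k + 1 := by omega
    rw [qBinom, qBinom, qBinom, if_pos (by omega), if_pos (by omega), if_pos (by omega),
      e1, e2, e3]
    have hx : s + k + 1 + 1 = (s + k + 1) + 1 := rfl
    rw [hx, qPoch_succ q (s+k+1), qPoch_succ q (s), qPoch_succ q (k)]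
    have h1 := (qPoch_pos hq0 hq1 (s+k+1)).ne'
    have h2 := (qPoch_pos hq0 hq1 s).ne'
    have h3 := (qPoch_pos hq0 hq1 k).ne'
    have h4 : (1:ℝ) - q^(s+1) ≠ 0 := (one_sub_pow_pos hq0 hq1 _ (by omega)).ne'
    have h5 : (1:ℝ) - q^(k+1) ≠ 0 := (one_sub_pow_pos hq0 hq1 _ (by omega)).ne'
    field_simp
    ring

lemma qBinom_gt {q : ℝ} (n r : ℕ) (h : n < r) : qBinom q n r = 0 := by
  rw [qBinom, if_neg (by omega)]

noncomputable def Rhs (q : ℝ) (m n : ℕ) : ℝ :=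
  ∑ r ∈ Finset.Icc 1 n,
    qBinom q n r * (-1) ^ (r - 1) * q ^ (r * (r - 1) / 2 + m * r) / (1 - q ^ r) ^ m

lemma sum_Icc_one (f : ℕ → ℝ) (n : ℕ) :
    ∑ i ∈ Finset.Icc 1 n, f i = ∑ i ∈ Finset.range n, f (i+1) := by
  rw [← Finset.Ico_add_one_right_eq_Icc, Finset.sum_Ico_eq_sum_range]
  simp [Nat.add_comm]

lemma Rhs_eq (q : ℝ) (m n : ℕ) :
    Rhs q m n = ∑ s ∈ Finset.range n,
      qBinom q n (s+1) * (-1) ^ s * q ^ ((s+1) * s / 2 + m * (s+1)) / (1 - q ^ (s+1)) ^ m := by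
  rw [Rhs, sum_Icc_one]
  simp

/-- Alternating q-binomial sum. -/
noncomputable def Bsum (q : ℝ) (n : ℕ) : ℝ :=
  ∑ s ∈ Finset.range (n+1), qBinom q n s * (-1) ^ s * q ^ (s * (s-1) / 2)

lemma Bsum_zero {q : ℝ} (hq0 : 0 < q) (hq1 : q < 1) : Bsum q 0 = 1 := by
  simp [Bsum, qBinom_self hq0 hq1]

lemma tri (s : ℕ) : (s+1) * s / 2 = s * (s-1) / 2 + s := by
  have h1 : 2 ∣ (s+1) * s := by
    rw [mul_comm]; exact (Nat.even_mul_succ_self s).two_dvd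
  have h2 : 2 ∣ s * (s-1) := by
    cases s with
    | zero => simp
    | succ t => rw [Nat.succ_sub_one, mul_comm]; exact (Nat.even_mul_succ_self t).two_dvd
  have h3 : (s+1) * s = s * (s-1) + 2*s := by
    cases s with
    | zero => rfl
    | succ t => rw [Nat.succ_sub_one]; ring
  omega

lemma Bsum_succ {q : ℝ} (hq0 : 0 < q) (hq1 : q < 1) (n : ℕ) :
    Bsum q (n+1) = (1 - q^n) * Bsum q n := by
  rw [Bsum, Finset.sum_range_succ']
  have h0 : qBinom q (n+1) 0 * (-1 : ℝ) ^ 0 * q ^ (0 * (0-1) / 2) = 1 := by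
    simp [qBinom_zero hq0 hq1]
  rw [h0]
  have step : ∀ t ∈ Finset.range (n+1),
      qBinom q (n+1) (t+1) * (-1 : ℝ) ^ (t+1) * q ^ ((t+1) * ((t+1)-1) / 2)
      = qBinom q n (t+1) * (-1) ^ (t+1) * q ^ ((t+1) * t / 2)
        + (-(q^n)) * (qBinom q n t * (-1) ^ t * q ^ (t * (t-1) / 2)) := by
    intro t ht
    have htn : t ≤ n := Nat.lt_succ_iff.mp (Finset.mem_range.mp ht)
    rw [qBinom_pascal hq0 hq1 t n htn]
    obtain ⟨k, rfl⟩ : ∃ k, n = t + k := ⟨n - t, by omega⟩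
    have e : t + k - t = k := by omega
    have e2 : (t+1) - 1 = t := by omega
    rw [e, e2, tri t, pow_add, pow_add, pow_succ]
    ring
  rw [Finset.sum_congr rfl step, Finset.sum_add_distrib, ← Finset.mul_sum]
  have first : ∑ t ∈ Finset.range (n+1), qBinom q n (t+1) * (-1:ℝ) ^ (t+1) * q ^ ((t+1) * t / 2)
      = Bsum q n - 1 := by
    rw [Finset.sum_range_succ, qBinom_gt n (n+1) (by omega), Bsum, Finset.sum_range_succ']
    have h0' : qBinom q n 0 * (-1 : ℝ) ^ 0 * q ^ (0 * (0-1) / 2) = 1 := by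
      simp [qBinom_zero hq0 hq1]
    rw [h0']
    have : ∀ t, (t+1) * ((t+1) - 1) / 2 = (t+1) * t / 2 := by intro t; simp
    simp only [this]
    ring
  rw [first, Bsum]
  ring

lemma Bsum_eq_zero {q : ℝ} (hq0 : 0 < q) (hq1 : q < 1) (n : ℕ) : Bsum q (n+1) = 0 := by
  induction n with
  | zero => rw [Bsum_succ hq0 hq1, Bsum_zero hq0 hq1]; simp
  | succ n ih => rw [Bsum_succ hq0 hq1, ih]; ring

lemma lemA {q : ℝ} (hq0 : 0 < q) (hq1 : q < 1) (n : ℕ) : Rhs q 0 (n+1) = 1 := by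
  have hB := Bsum_eq_zero hq0 hq1 n
  rw [Bsum, Finset.sum_range_succ'] at hB
  have h0 : qBinom q (n+1) 0 * (-1 : ℝ) ^ 0 * q ^ (0 * (0-1) / 2) = 1 := by
    simp [qBinom_zero hq0 hq1]
  rw [h0] at hB
  rw [Rhs_eq]
  have : ∀ s, qBinom q (n+1) (s+1) * (-1:ℝ) ^ s * q ^ ((s+1) * s / 2 + 0 * (s+1)) / (1 - q^(s+1)) ^ 0
      = -(qBinom q (n+1) (s+1) * (-1) ^ (s+1) * q ^ ((s+1) * ((s+1)-1) / 2)) := by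
    intro s
    simp only [Nat.zero_mul, Nat.add_zero, pow_zero, div_one, Nat.add_sub_cancel, pow_succ]
    ring
  simp only [this]
  rw [Finset.sum_neg_distrib]
  linarith [hB]

lemma key_term (B C D E e w z y : ℝ) (hD : D ≠ 0) (hE : E ≠ 0) (m : ℕ)
    (h : (B + y * C) * D = C * E) :
    (B + y * C) * e * (w * z^(m+1)) / D^(m+1)
      = B * e * (w * z^(m+1)) / D^(m+1) + z * y / E * ((B + y * C) * e * (w * z^m) / D^m) := by
  have hB : B = C * E / D - y * C := by
    field_simp
    linarith [h]
  rw [hB]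
  field_simp
  ring

lemma lemB {q : ℝ} (hq0 : 0 < q) (hq1 : q < 1) (m n : ℕ) :
    Rhs q (m+1) (n+1) = Rhs q (m+1) n + q^(n+1) / (1 - q^(n+1)) * Rhs q m (n+1) := by
  rw [Rhs_eq q (m+1) (n+1)]
  have step : ∀ s ∈ Finset.range (n+1),
      qBinom q (n+1) (s+1) * (-1:ℝ) ^ s * q ^ ((s+1) * s / 2 + (m+1) * (s+1)) / (1 - q^(s+1)) ^ (m+1)
      = qBinom q n (s+1) * (-1) ^ s * q ^ ((s+1) * s / 2 + (m+1) * (s+1)) / (1 - q^(s+1)) ^ (m+1)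
        + q^(n+1) / (1 - q^(n+1)) *
          (qBinom q (n+1) (s+1) * (-1) ^ s * q ^ ((s+1) * s / 2 + m * (s+1)) / (1 - q^(s+1)) ^ m) := by
    intro s hs
    have hsn : s ≤ n := Nat.lt_succ_iff.mp (Finset.mem_range.mp hs)
    have hsym := qBinom_symm_id hq0 hq1 s n hsn
    have hD : (1:ℝ) - q^(s+1) ≠ 0 := (one_sub_pow_pos hq0 hq1 _ (by omega)).ne'
    have hE : (1:ℝ) - q^(n+1) ≠ 0 := (one_sub_pow_pos hq0 hq1 _ (by omega)).ne'
    rw [qBinom_pascal hq0 hq1 s n hsn]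
    rw [qBinom_pascal hq0 hq1 s n hsn] at hsym
    have hpow1 : q ^ ((s+1) * s / 2 + (m+1) * (s+1))
        = q ^ ((s+1) * s / 2) * (q^(s+1))^(m+1) := by rw [pow_add, pow_mul']
    have hpow2 : q ^ ((s+1) * s / 2 + m * (s+1))
        = q ^ ((s+1) * s / 2) * (q^(s+1))^m := by rw [pow_add, pow_mul']
    have hpow3 : q ^ (n+1) = q^(s+1) * q^(n-s) := by
      rw [← pow_add]
      congr 1
      omega
    rw [hpow1, hpow2, hpow3]
    rw [hpow3] at hsym
    exact key_term (qBinom q n (s+1)) (qBinom q n s) (1 - q^(s+1)) (1 - q^(s+1) * q^(n-s))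
      ((-1)^s) (q^((s+1)*s/2)) (q^(s+1)) (q^(n-s)) hD (by rw [hpow3] at hE; exact hE) m hsym
  rw [Finset.sum_congr rfl step, Finset.sum_add_distrib, ← Finset.mul_sum]
  rw [Finset.sum_range_succ, qBinom_gt n (n+1) (by omega), Rhs_eq q (m+1) n, Rhs_eq q m (n+1)]
  ring

lemma sumB {q : ℝ} (hq0 : 0 < q) (hq1 : q < 1) (m : ℕ) :
    ∀ N, ∑ i ∈ Finset.Icc 1 N, q^i / (1 - q^i) * Rhs q m i = Rhs q (m+1) N := by
  intro N
  induction N with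
  | zero => simp [Rhs]
  | succ N ih =>
      rw [← Finset.Ico_add_one_right_eq_Icc, Finset.sum_Ico_succ_top (by omega), Finset.Ico_add_one_right_eq_Icc, ih,
        lemB hq0 hq1 m N]

lemma main {q : ℝ} (hq0 : 0 < q) (hq1 : q < 1) (m : ℕ) :
    ∀ n, dSum q m (n+1) = Rhs q m (n+1) := by
  induction m with
  | zero => intro n; rw [lemA hq0 hq1]; rfl
  | succ m ih =>
      intro n
      show ∑ i ∈ Finset.Icc 1 (n+1), q^i / (1 - q^i) * dSum q m i = _
      rw [← sumB hq0 hq1 m (n+1)]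
      apply Finset.sum_congr rfl
      intro i hi
      obtain ⟨j, rfl⟩ : ∃ j, i = j + 1 := by
        have := (Finset.mem_Icc.mp hi).1; exact ⟨i - 1, by omega⟩
      rw [ih j]

/-- Dilcher's identity. -/
theorem dilcher (q : ℝ) (hq0 : 0 < q) (hq1 : q < 1) (n m : ℕ) (hn : 0 < n) (hm : 0 < m) :
    dSum q m n =
      ∑ r ∈ Finset.Icc 1 n,
        qBinom q n r * (-1) ^ (r - 1) * q ^ (r * (r - 1) / 2 + m * r) / (1 - q ^ r) ^ m := by
  obtain ⟨n', rfl⟩ : ∃ n', n = n' + 1 := ⟨n - 1, by omega⟩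
  rw [main hq0 hq1 m n']
  rfl
end

section
/- For integers 1 ≤ i ≤ n, a nonnegative integer k, and parameters z, q making all denominators nonzero: ∑_{r≥0} binom(k+r, k) (z-1)^r h_{k+r}(q^i/(1-q^i), ..., q^n/(1-q^n)) = [(1-q^i)(q;q)_n (zq;q)_i] / [(1-zq^i)(zq;q)_n (q;q)_i] · h_k(q^i/(1-zq^i), ..., q^n/(1-zq^n)), whenever the series converges. -/
/-- Complete homogeneous symmetric polynomial `h_k` of the entries of a list. -/
noncomputable def hPoly : List ℝ → ℕ → ℝ
  | _, 0 => 1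
  | [], _ + 1 => 0
  | a :: as, k + 1 => a * hPoly (a :: as) k + hPoly as (k + 1)
termination_by l k => (l.length, k)

/-- The list `[f i, f (i+1), …, f n]`. -/
def varList (f : ℕ → ℝ) (i n : ℕ) : List ℝ := (List.range (n + 1 - i)).map fun j => f (i + j)

lemma hPoly_zero (L : List ℝ) : hPoly L 0 = 1 := by cases L <;> simp [hPoly]
lemma hPoly_nil_succ (m : ℕ) : hPoly [] (m+1) = 0 := by simp [hPoly]
lemma hPoly_cons_succ (a : ℝ) (as : List ℝ) (m : ℕ) :
    hPoly (a :: as) (m+1) = a * hPoly (a :: as) m + hPoly as (m+1) := by rw [hPoly]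

lemma hPoly_conv (a : ℝ) (as : List ℝ) (m : ℕ) :
    hPoly (a :: as) m = ∑ s ∈ Finset.range (m+1), a^(m-s) * hPoly as s := by
  induction m with
  | zero => simp [hPoly_zero]
  | succ m ih =>
      rw [hPoly_cons_succ, ih, Finset.mul_sum, Finset.sum_range_succ (n := m+1)]
      have : ∀ s ∈ Finset.range (m+1), a * (a^(m-s) * hPoly as s) = a^(m+1-s) * hPoly as s := by
        intro s hs
        rw [Finset.mem_range] at hs
        have h2 : m + 1 - s = (m - s) + 1 := by omega
        rw [h2, pow_succ]; ring
      rw [Finset.sum_congr rfl this]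
      simp

def csum (a b : ℝ) (s : ℕ) : ℝ := ∑ u ∈ Finset.range (s+1), a^u * b^(s-u)

lemma csum_comm (a b : ℝ) (s : ℕ) : csum a b s = csum b a s := by
  unfold csum
  rw [← Finset.sum_range_reflect]
  apply Finset.sum_congr rfl
  intro u hu
  rw [Finset.mem_range] at hu
  have h2 : s + 1 - 1 - u = s - u := by omega
  rw [h2]
  have h1 : s - (s - u) = u := by omega
  rw [h1, mul_comm]

lemma csum_succ (a b : ℝ) (s : ℕ) : csum a b (s+1) = b^(s+1) + a * csum a b s := by
  unfold csum
  rw [Finset.sum_range_succ' (fun u => a^u * b^(s+1-u)) (s+1), Finset.mul_sum]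
  have : ∀ u ∈ Finset.range (s+1), a^(u+1) * b^(s+1-(u+1)) = a * (a^u * b^(s-u)) := by
    intro u hu
    have : s + 1 - (u+1) = s - u := by omega
    rw [this, pow_succ]; ring
  rw [Finset.sum_congr rfl this]
  simp [add_comm]

lemma hPoly_pairconv (a b : ℝ) (l : List ℝ) (m : ℕ) :
    hPoly (a :: b :: l) m = ∑ s ∈ Finset.range (m+1), csum a b s * hPoly l (m-s) := by
  induction m with
  | zero => simp [hPoly_zero, csum]
  | succ m ih =>
      rw [hPoly_cons_succ, ih, hPoly_conv b l (m+1)]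
      -- reindex second sum: ∑_{s<m+2} b^(m+1-s) h_s = ∑_{s<m+2} b^s h_(m+1-s)
      have hre : ∑ s ∈ Finset.range (m+2), b^(m+1-s) * hPoly l s
          = ∑ s ∈ Finset.range (m+2), b^s * hPoly l (m+1-s) := by
        rw [← Finset.sum_range_reflect]
        apply Finset.sum_congr rfl
        intro u hu
        rw [Finset.mem_range] at hu
        have h2 : m + 2 - 1 - u = m + 1 - u := by omega
        rw [h2]
        have h1 : m + 1 - (m + 1 - u) = u := by omega
        rw [h1]
      rw [hre]
      -- RHS: split off s = 0 via sum_range_succ'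
      rw [Finset.sum_range_succ' (fun s => csum a b s * hPoly l (m+1-s)) (m+1)]
      rw [Finset.sum_range_succ' (fun s => b^s * hPoly l (m+1-s)) (m+1)]
      have : ∀ s ∈ Finset.range (m+1),
          csum a b (s+1) * hPoly l (m+1-(s+1))
          = b^(s+1) * hPoly l (m+1-(s+1)) + a * (csum a b s * hPoly l (m-s)) := by
        intro s hs
        have : m + 1 - (s+1) = m - s := by omega
        rw [this, csum_succ]; ring
      rw [Finset.sum_congr rfl this, Finset.sum_add_distrib, ← Finset.mul_sum]
      simp [csum, hPoly_zero]
      ring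

lemma hPoly_swap (a b : ℝ) (l : List ℝ) (m : ℕ) :
    hPoly (a :: b :: l) m = hPoly (b :: a :: l) m := by
  rw [hPoly_pairconv, hPoly_pairconv]
  exact Finset.sum_congr rfl fun s _ => by rw [csum_comm]

lemma hPoly_perm {L L' : List ℝ} (h : L.Perm L') (m : ℕ) : hPoly L m = hPoly L' m := by
  induction h generalizing m with
  | nil => rfl
  | cons a h ih =>
      rw [hPoly_conv, hPoly_conv]
      exact Finset.sum_congr rfl fun s _ => by rw [ih]
  | swap a b l => exact hPoly_swap b a l m
  | trans h1 h2 ih1 ih2 => rw [ih1, ih2]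

lemma choose_le_pow_succ : ∀ n k : ℕ, n.choose k ≤ (n+1)^k := by
  intro n
  induction n with
  | zero => intro k; cases k <;> simp [Nat.choose]
  | succ n ih =>
      intro k
      cases k with
      | zero => simp
      | succ k =>
          rw [Nat.choose_succ_succ]
          calc n.choose k + n.choose (k+1) ≤ (n+1)^k + (n+1)^(k+1) :=
                Nat.add_le_add (ih k) (ih (k+1))
            _ = (n+1)^k * (n+2) := by ring
            _ ≤ (n+2)^k * (n+2) := Nat.mul_le_mul_right _ (Nat.pow_le_pow_left (by omega) k)
            _ = (n+2)^(k+1) := by ring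

lemma hPoly_bound {A : ℝ} (hA : 0 ≤ A) :
    ∀ (L : List ℝ), (∀ a ∈ L, |a| ≤ A) → ∀ m, |hPoly L m| ≤ ((m:ℝ)+1)^L.length * A^m := by
  intro L
  induction L with
  | nil =>
      intro _ m
      cases m with
      | zero => simp [hPoly_zero]
      | succ m => rw [hPoly_nil_succ]; simp; positivity
  | cons a as ih =>
      intro hmem m
      have ha : |a| ≤ A := hmem a (List.mem_cons_self)
      have has : ∀ b ∈ as, |b| ≤ A := fun b hb => hmem b (List.mem_cons_of_mem a hb)
      rw [hPoly_conv]
      have key : ∀ s ∈ Finset.range (m+1),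
          |a^(m-s) * hPoly as s| ≤ ((m:ℝ)+1)^as.length * A^m := by
        intro s hs
        rw [Finset.mem_range] at hs
        have hsm : s ≤ m := by omega
        rw [abs_mul, abs_pow]
        have h1 : |a|^(m-s) * |hPoly as s| ≤ A^(m-s) * (((s:ℝ)+1)^as.length * A^s) :=
          mul_le_mul (pow_le_pow_left₀ (abs_nonneg a) ha _) (ih has s) (abs_nonneg _)
            (by positivity)
        have h2 : ((s:ℝ)+1)^as.length ≤ ((m:ℝ)+1)^as.length := by
          apply pow_le_pow_left₀ (by positivity)
          have : (s:ℝ) ≤ (m:ℝ) := by exact_mod_cast hsm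
          linarith
        have h3 : A^(m-s) * (((s:ℝ)+1)^as.length * A^s)
            ≤ A^(m-s) * (((m:ℝ)+1)^as.length * A^s) := by
          apply mul_le_mul_of_nonneg_left _ (by positivity)
          exact mul_le_mul_of_nonneg_right h2 (by positivity)
        have h4 : A^(m-s) * (((m:ℝ)+1)^as.length * A^s) = ((m:ℝ)+1)^as.length * A^m := by
          rw [show A^(m-s) * (((m:ℝ)+1)^as.length * A^s) =
            ((m:ℝ)+1)^as.length * (A^(m-s) * A^s) from by ring, pow_sub_mul_pow A hsm]
        linarith
      calc |∑ s ∈ Finset.range (m+1), a^(m-s) * hPoly as s|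
          ≤ ∑ s ∈ Finset.range (m+1), |a^(m-s) * hPoly as s| := Finset.abs_sum_le_sum_abs _ _
        _ ≤ ∑ _s ∈ Finset.range (m+1), ((m:ℝ)+1)^as.length * A^m := Finset.sum_le_sum key
        _ = ((m:ℝ)+1)^(a::as).length * A^m := by
            rw [Finset.sum_const, Finset.card_range]
            simp [List.length_cons]
            push_cast
            ring

lemma exists_abs_max : ∀ (L : List ℝ), L ≠ [] → ∃ c ∈ L, ∀ b ∈ L, |b| ≤ |c| := by
  intro L
  induction L with
  | nil => intro h; exact absurd rfl h
  | cons a as ih =>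
      intro _
      rcases eq_or_ne as [] with rfl | hne
      · exact ⟨a, List.mem_cons_self, by intro b hb; simp at hb; simp [hb]⟩
      · obtain ⟨c, hc, hmax⟩ := ih hne
        rcases le_total |a| |c| with h | h
        · exact ⟨c, List.mem_cons_of_mem a hc, by
            intro b hb
            rcases List.mem_cons.mp hb with rfl | hb
            · exact h
            · exact hmax b hb⟩
        · exact ⟨a, List.mem_cons_self, by
            intro b hb
            rcases List.mem_cons.mp hb with rfl | hb
            · exact le_refl _
            · exact le_trans (hmax b hb) h⟩

lemma summable_polygeo {θ : ℝ} (hθ : |θ| < 1) (d : ℕ) :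
    Summable (fun r : ℕ => ((r:ℝ)+1)^d * θ^r) := by
  have : ∀ r : ℕ, ((r:ℝ)+1)^d * θ^r
      = ∑ j ∈ Finset.range (d+1), (d.choose j : ℝ) * ((r:ℝ)^j * θ^r) := by
    intro r
    rw [add_pow, Finset.sum_mul]
    apply Finset.sum_congr rfl
    intro j _
    simp; ring
  rw [funext this]
  apply summable_sum
  intro j _
  exact (summable_pow_mul_geometric_of_norm_lt_one j (R := ℝ) (by simpa using hθ)).mul_left _

lemma bigSummable_abs {x : ℝ} {L : List ℝ} (hsmall : ∀ a ∈ L, |x*a| < 1) (k : ℕ) :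
    Summable (fun r : ℕ => |((k+r).choose k : ℝ) * x^r * hPoly L (k+r)|) := by
  rcases eq_or_ne L [] with rfl | hne
  · apply summable_of_ne_finset_zero (s := {0})
    intro r hr
    simp at hr
    have : k + r = (k + r - 1) + 1 := by omega
    rw [this, hPoly_nil_succ]
    simp
  · obtain ⟨c, hc, hmax⟩ := exists_abs_max L hne
    set A := |c| with hAdef
    have hA : 0 ≤ A := abs_nonneg c
    set θ := |x| * A with hθdef
    have hθ0 : 0 ≤ θ := by positivity
    have hθ1 : θ < 1 := by rw [hθdef, ← abs_mul]; exact hsmall c hc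
    set d := k + L.length with hddef
    have hb : Summable (fun r : ℕ => (((k:ℝ)+1)^d * A^k) * (((r:ℝ)+1)^d * θ^r)) :=
      (summable_polygeo (by rwa [abs_of_nonneg hθ0]) d).mul_left _
    apply Summable.of_nonneg_of_le (fun r => abs_nonneg _) _ hb
    intro r
    ·
      rw [abs_mul, abs_mul, abs_pow]
      have hch : (((k+r).choose k : ℕ) : ℝ) ≤ ((k:ℝ)+(r:ℝ)+1)^k := by
        have := choose_le_pow_succ (k+r) k
        calc (((k+r).choose k : ℕ) : ℝ) ≤ (((k+r+1)^k : ℕ) : ℝ) := by exact_mod_cast this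
          _ = ((k:ℝ)+(r:ℝ)+1)^k := by push_cast; ring
      have hh : |hPoly L (k+r)| ≤ ((k:ℝ)+(r:ℝ)+1)^L.length * A^(k+r) := by
        have := hPoly_bound hA L (fun a ha => hmax a ha) (k+r)
        calc |hPoly L (k+r)| ≤ (((k+r:ℕ):ℝ)+1)^L.length * A^(k+r) := this
          _ = ((k:ℝ)+(r:ℝ)+1)^L.length * A^(k+r) := by push_cast; ring
      have habs : |(((k+r).choose k : ℕ) : ℝ)| = (((k+r).choose k : ℕ) : ℝ) :=
        abs_of_nonneg (by positivity)
      calc |(((k+r).choose k : ℕ) : ℝ)| * |x|^r * |hPoly L (k+r)|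
          ≤ ((k:ℝ)+(r:ℝ)+1)^k * |x|^r * (((k:ℝ)+(r:ℝ)+1)^L.length * A^(k+r)) := by
            rw [habs]
            apply mul_le_mul _ hh (abs_nonneg _) (by positivity)
            exact mul_le_mul_of_nonneg_right hch (by positivity)
        _ = ((k:ℝ)+(r:ℝ)+1)^d * (A^k * θ^r) := by
            rw [hddef, pow_add A k r, hθdef, mul_pow, pow_add ((k:ℝ)+(r:ℝ)+1) k L.length]
            ring
        _ ≤ (((k:ℝ)+1)*((r:ℝ)+1))^d * (A^k * θ^r) := by
            apply mul_le_mul_of_nonneg_right _ (by positivity)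
            apply pow_le_pow_left₀ (by positivity)
            nlinarith [Nat.cast_nonneg (α := ℝ) k, Nat.cast_nonneg (α := ℝ) r]
        _ = (((k:ℝ)+1)^d * A^k) * (((r:ℝ)+1)^d * θ^r) := by rw [mul_pow]; ring

lemma bigSummable {x : ℝ} {L : List ℝ} (hsmall : ∀ a ∈ L, |x*a| < 1) (k : ℕ) :
    Summable (fun r : ℕ => ((k+r).choose k : ℝ) * x^r * hPoly L (k+r)) :=
  summable_abs_iff.mp (bigSummable_abs hsmall k)

lemma smallSummable {x : ℝ} {L : List ℝ} (hsmall : ∀ a ∈ L, |x*a| < 1) :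
    Summable (fun m : ℕ => hPoly L m * x^m) := by
  have := bigSummable hsmall 0
  simpa [mul_comm] using this

set_option maxHeartbeats 2000000 in
lemma hPoly_GF {x : ℝ} : ∀ (L : List ℝ), (∀ a ∈ L, |x*a| < 1) →
    ∑' m : ℕ, hPoly L m * x^m = (L.map fun a => (1 - x*a)⁻¹).prod := by
  intro L
  induction L with
  | nil =>
      intro _
      rw [tsum_eq_single 0 (by
        intro m hm
        have : m = (m-1)+1 := by omega
        rw [this, hPoly_nil_succ]; ring)]
      simp [hPoly_zero]
  | cons a as ih =>
      intro hsmall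
      have hxa : |x*a| < 1 := hsmall a (List.mem_cons_self)
      have hsas : ∀ b ∈ as, |x*b| < 1 := fun b hb => hsmall b (List.mem_cons_of_mem a hb)
      have hne : 1 - x*a ≠ 0 := by
        intro h
        have hone : x*a = 1 := by linarith
        rw [hone] at hxa; simp at hxa
      have hS : Summable (fun m : ℕ => hPoly (a::as) m * x^m) := smallSummable hsmall
      have hT : Summable (fun m : ℕ => hPoly as m * x^m) := smallSummable hsas
      have h1 : Summable (fun m : ℕ => (a*x) * (hPoly (a::as) m * x^m)) := hS.mul_left _
      have h2 : Summable (fun m : ℕ => hPoly as (m+1) * x^(m+1)) :=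
        (summable_nat_add_iff 1).mpr hT
      have hterm : (fun m : ℕ => hPoly (a::as) (m+1) * x^(m+1))
          = fun m : ℕ => (a*x) * (hPoly (a::as) m * x^m) + hPoly as (m+1) * x^(m+1) := by
        funext m
        rw [hPoly_cons_succ, pow_succ]
        ring
      have hsplit : ∑' m : ℕ, hPoly (a::as) (m+1) * x^(m+1)
          = (a*x) * (∑' m : ℕ, hPoly (a::as) m * x^m)
            + ∑' m : ℕ, hPoly as (m+1) * x^(m+1) := by
        rw [tsum_congr (fun m => congrFun hterm m), Summable.tsum_add h1 h2, tsum_mul_left]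
      have htail : (∑' m : ℕ, hPoly as m * x^m)
          = 1 + ∑' m : ℕ, hPoly as (m+1) * x^(m+1) := by
        have h0 : (∑' m : ℕ, hPoly as m * x^m)
            = hPoly as 0 * x^0 + ∑' m : ℕ, hPoly as (m+1) * x^(m+1) := Summable.tsum_eq_zero_add hT
        rw [hPoly_zero, pow_zero, one_mul] at h0
        exact h0
      have hfull : (∑' m : ℕ, hPoly (a::as) m * x^m)
          = 1 + ∑' m : ℕ, hPoly (a::as) (m+1) * x^(m+1) := by
        have h0 : (∑' m : ℕ, hPoly (a::as) m * x^m)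
            = hPoly (a::as) 0 * x^0 + ∑' m : ℕ, hPoly (a::as) (m+1) * x^(m+1) :=
          Summable.tsum_eq_zero_add hS
        rw [hPoly_zero, pow_zero, one_mul] at h0
        exact h0
      rw [List.map_cons, List.prod_cons, ← ih hsas, inv_mul_eq_div, eq_div_iff hne]
      linear_combination hfull + hsplit - htail

lemma summable_tail {x a : ℝ} {as : List ℝ}
    (h : Summable fun m : ℕ => hPoly (a::as) m * x^m) :
    Summable fun m : ℕ => hPoly as m * x^m := by
  have h1 : Summable (fun m : ℕ => hPoly (a::as) (m+1) * x^(m+1)) :=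
    (summable_nat_add_iff 1).mpr h
  have h2 : Summable (fun m : ℕ => hPoly (a::as) (m+1) * x^(m+1)
      - (a*x) * (hPoly (a::as) m * x^m)) := h1.sub (h.mul_left _)
  have h3 : (fun m : ℕ => hPoly (a::as) (m+1) * x^(m+1) - (a*x) * (hPoly (a::as) m * x^m))
      = fun m : ℕ => hPoly as (m+1) * x^(m+1) := by
    funext m
    rw [hPoly_cons_succ, pow_succ]
    ring
  rw [h3] at h2
  exact (summable_nat_add_iff 1).mp h2

lemma head_small {x a : ℝ} {as : List ℝ} (hmax : ∀ b ∈ as, |b| < |a|)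
    (hsum : Summable fun m : ℕ => hPoly (a::as) m * x^m) : |x*a| < 1 := by
  by_contra hcon
  push_neg at hcon
  have ha0 : a ≠ 0 := by
    intro h0
    rw [h0, mul_zero, abs_zero] at hcon
    linarith
  have hapos : 0 < |a| := abs_pos.mpr ha0
  have hsmall' : ∀ b ∈ as, |a⁻¹ * b| < 1 := by
    intro b hb
    rw [abs_mul, abs_inv]
    rw [inv_mul_lt_iff₀ hapos, mul_one]
    exact hmax b hb
  have hT : Summable (fun m : ℕ => hPoly as m * (a⁻¹)^m) := smallSummable hsmall'
  have hGF : ∑' m : ℕ, hPoly as m * (a⁻¹)^m = (as.map fun b => (1 - a⁻¹*b)⁻¹).prod :=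
    hPoly_GF as hsmall'
  set Pr := (as.map fun b => (1 - a⁻¹*b)⁻¹).prod with hPrdef
  have hPrne : Pr ≠ 0 := by
    apply List.prod_ne_zero
    intro h0
    rw [List.mem_map] at h0
    obtain ⟨b, hb, hb0⟩ := h0
    have h1 : 1 - a⁻¹ * b = 0 := inv_eq_zero.mp hb0
    have h2 : a⁻¹ * b = 1 := by linarith
    have h3 := hsmall' b hb
    rw [h2, abs_one] at h3
    exact lt_irrefl 1 h3
  -- partial sums of hT tend to Pr
  have htendPr : Filter.Tendsto (fun n : ℕ => ∑ s ∈ Finset.range (n+1), hPoly as s * (a⁻¹)^s)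
      Filter.atTop (nhds Pr) := by
    have h0 := hT.hasSum.tendsto_sum_nat
    rw [hGF] at h0
    exact h0.comp (Filter.tendsto_add_atTop_nat 1)
  -- partial sums equal (a^m)⁻¹ * hPoly (a::as) m
  have hpart : ∀ m : ℕ, ∑ s ∈ Finset.range (m+1), hPoly as s * (a⁻¹)^s
      = (a^m)⁻¹ * hPoly (a::as) m := by
    intro m
    rw [hPoly_conv, Finset.mul_sum]
    apply Finset.sum_congr rfl
    intro s hs
    rw [Finset.mem_range] at hs
    have hsm : s ≤ m := by omega
    have : (a^m)⁻¹ * (a^(m-s) * hPoly as s) = ((a^m)⁻¹ * a^(m-s)) * hPoly as s := by ring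
    rw [this]
    have hpow : (a^m)⁻¹ * a^(m-s) = (a⁻¹)^s := by
      have h4 : a^(m-s) * a^s = a^m := pow_sub_mul_pow a hsm
      have h5 : a^s ≠ 0 := pow_ne_zero s ha0
      have h6 : a^m ≠ 0 := pow_ne_zero m ha0
      rw [← h4, mul_inv, inv_pow, mul_right_comm, inv_mul_cancel₀ (pow_ne_zero _ ha0), one_mul]
    rw [hpow]
    ring
  -- bound |partial sum (m+1)| ≤ |hPoly (a::as) m * x^m|
  have hbound : ∀ m : ℕ, |(a^m)⁻¹ * hPoly (a::as) m| ≤ |hPoly (a::as) m * x^m| := by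
    intro m
    rw [abs_mul, abs_mul, abs_inv, abs_pow, abs_pow, mul_comm (|a|^m)⁻¹]
    apply mul_le_mul_of_nonneg_left _ (abs_nonneg _)
    rw [inv_le_iff_one_le_mul₀ (by positivity)]
    calc (1:ℝ) = 1^m := (one_pow m).symm
      _ ≤ |x*a|^m := pow_le_pow_left₀ (by norm_num) hcon m
      _ = |x|^m * |a|^m := by rw [abs_mul, mul_pow]
  -- partial sums tend to 0
  have hf0 : Filter.Tendsto (fun m : ℕ => hPoly (a::as) m * x^m) Filter.atTop (nhds 0) :=
    hsum.tendsto_atTop_zero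
  have habs0 : Filter.Tendsto (fun m : ℕ => |hPoly (a::as) m * x^m|) Filter.atTop (nhds 0) := by
    have := hf0.abs
    simpa using this
  have htend0 : Filter.Tendsto (fun m : ℕ => ∑ s ∈ Finset.range (m+1), hPoly as s * (a⁻¹)^s)
      Filter.atTop (nhds 0) := by
    have h7 : Filter.Tendsto (fun m : ℕ => |(a^m)⁻¹ * hPoly (a::as) m|)
        Filter.atTop (nhds 0) :=
      squeeze_zero (fun m => abs_nonneg _) hbound habs0
    have h8 : Filter.Tendsto (fun m : ℕ => (a^m)⁻¹ * hPoly (a::as) m)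
        Filter.atTop (nhds 0) := by
      exact (tendsto_zero_iff_abs_tendsto_zero _).mpr h7
    have h9 : (fun m : ℕ => ∑ s ∈ Finset.range (m+1), hPoly as s * (a⁻¹)^s)
        = fun m : ℕ => (a^m)⁻¹ * hPoly (a::as) m := funext hpart
    rw [h9]
    exact h8
  exact hPrne (tendsto_nhds_unique htendPr htend0)

lemma summable_imp_small_aux {x : ℝ} :
    ∀ (N : ℕ) (L : List ℝ), L.length ≤ N →
      (Summable fun m : ℕ => hPoly L m * x^m) → ∀ a ∈ L, |x*a| < 1 := by
  intro N
  induction N with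
  | zero =>
      intro L hL _ a ha
      have : L = [] := List.eq_nil_of_length_eq_zero (Nat.le_zero.mp hL)
      rw [this] at ha
      exact absurd ha List.not_mem_nil
  | succ N ih =>
      intro L hL hsum a ha
      have hne : L ≠ [] := by
        intro h; rw [h] at ha; exact List.not_mem_nil ha
      obtain ⟨c, hc, hmax⟩ := exists_abs_max L hne
      have hperm := List.perm_cons_erase hc
      have hsum' : Summable fun m : ℕ => hPoly (c :: L.erase c) m * x^m := by
        have heq : (fun m : ℕ => hPoly L m * x^m)
            = fun m : ℕ => hPoly (c :: L.erase c) m * x^m :=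
          funext fun m => by rw [hPoly_perm hperm m]
        rwa [heq] at hsum
      have hxa_le : ∀ b : ℝ, |b| ≤ |c| → |x*b| ≤ |x*c| := by
        intro b hb
        rw [abs_mul, abs_mul]
        exact mul_le_mul_of_nonneg_left hb (abs_nonneg x)
      by_cases hstrict : ∀ b ∈ L.erase c, |b| < |c|
      · have hxc := head_small hstrict hsum'
        exact lt_of_le_of_lt (hxa_le a (hmax a ha)) hxc
      · push_neg at hstrict
        obtain ⟨b, hb, hcb⟩ := hstrict
        have hsum'' : Summable fun m : ℕ => hPoly (L.erase c) m * x^m := summable_tail hsum'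
        have hlen : (L.erase c).length ≤ N := by
          rw [List.length_erase_of_mem hc]
          have : 1 ≤ L.length := List.length_pos_iff.mpr hne
          omega
        have hxb := ih (L.erase c) hlen hsum'' b hb
        have hbc : |c| ≤ |b| := hcb
        calc |x*a| ≤ |x*c| := hxa_le a (hmax a ha)
          _ ≤ |x*b| := by
              rw [abs_mul, abs_mul]
              exact mul_le_mul_of_nonneg_left hbc (abs_nonneg x)
          _ < 1 := hxb

set_option maxHeartbeats 1000000 in
lemma partI {x : ℝ} : ∀ (k : ℕ) (L : List ℝ), (∀ a ∈ L, |x*a| < 1) →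
    (∑' r : ℕ, ((k+r).choose k : ℝ) * x^r * hPoly L (k+r))
      = (L.map fun a => (1 - x*a)⁻¹).prod * hPoly (L.map fun a => a / (1 - x*a)) k := by
  intro k
  induction k with
  | zero =>
      intro L hsmall
      have h1 : (fun r : ℕ => ((0+r).choose 0 : ℝ) * x^r * hPoly L (0+r))
          = fun r : ℕ => hPoly L r * x^r := by
        funext r
        rw [Nat.choose_zero_right, Nat.zero_add]
        push_cast
        ring
      rw [tsum_congr (fun r => congrFun h1 r), hPoly_GF L hsmall, hPoly_zero, mul_one]
  | succ k ihK =>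
      intro L
      induction L with
      | nil =>
          intro _
          have h1 : (fun r : ℕ => ((k+1+r).choose (k+1) : ℝ) * x^r * hPoly [] (k+1+r))
              = fun _ : ℕ => (0:ℝ) := by
            funext r
            have h2 : k+1+r = (k+r)+1 := by omega
            rw [h2, hPoly_nil_succ]
            ring
          rw [tsum_congr (fun r => congrFun h1 r), tsum_zero, List.map_nil, List.map_nil,
            List.prod_nil, hPoly_nil_succ, mul_zero]
      | cons a as ihL =>
          intro hsmall
          have hxa : |x*a| < 1 := hsmall a (List.mem_cons_self)
          have hsas : ∀ b ∈ as, |x*b| < 1 := fun b hb => hsmall b (List.mem_cons_of_mem a hb)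
          have hne : 1 - x*a ≠ 0 := by
            intro h
            have hone : x*a = 1 := by linarith
            rw [hone] at hxa; simp at hxa
          have hg : Summable (fun r : ℕ =>
              ((k+1+r).choose (k+1) : ℝ) * x^r * hPoly (a::as) (k+1+r)) :=
            bigSummable hsmall (k+1)
          have hgk : Summable (fun r : ℕ =>
              ((k+r).choose k : ℝ) * x^r * hPoly (a::as) (k+r)) :=
            bigSummable hsmall k
          have hgas : Summable (fun r : ℕ =>
              ((k+1+r).choose (k+1) : ℝ) * x^r * hPoly as (k+1+r)) :=
            bigSummable hsas (k+1)
          have hdshift : (fun r : ℕ =>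
              ((k+(r+1)).choose (k+1) : ℝ) * x^(r+1) * hPoly (a::as) (k+(r+1)))
              = fun r : ℕ =>
                x * (((k+1+r).choose (k+1) : ℝ) * x^r * hPoly (a::as) (k+1+r)) := by
            funext r
            have h2 : k+(r+1) = k+1+r := by omega
            rw [h2, pow_succ]
            ring
          have hd : Summable (fun r : ℕ =>
              ((k+r).choose (k+1) : ℝ) * x^r * hPoly (a::as) (k+r)) := by
            apply (summable_nat_add_iff 1).mp
            have h3 : (fun r : ℕ => ((k+(r+1)).choose (k+1) : ℝ) * x^(r+1) *
                hPoly (a::as) (k+(r+1))) = fun r : ℕ =>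
                x * (((k+1+r).choose (k+1) : ℝ) * x^r * hPoly (a::as) (k+1+r)) := hdshift
            exact h3 ▸ (hg.mul_left x)
          have hD : (∑' r : ℕ, ((k+r).choose (k+1) : ℝ) * x^r * hPoly (a::as) (k+r))
              = x * ∑' r : ℕ, ((k+1+r).choose (k+1) : ℝ) * x^r * hPoly (a::as) (k+1+r) := by
            have h0 : (∑' r : ℕ, ((k+r).choose (k+1) : ℝ) * x^r * hPoly (a::as) (k+r))
                = ((k+0).choose (k+1) : ℝ) * x^0 * hPoly (a::as) (k+0)
                  + ∑' r : ℕ, ((k+(r+1)).choose (k+1) : ℝ) * x^(r+1) *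
                      hPoly (a::as) (k+(r+1)) := Summable.tsum_eq_zero_add hd
            rw [Nat.add_zero, Nat.choose_succ_self] at h0
            rw [h0, tsum_congr (fun r => congrFun hdshift r), tsum_mul_left]
            push_cast
            ring
          have htermEq : (fun r : ℕ =>
              ((k+1+r).choose (k+1) : ℝ) * x^r * hPoly (a::as) (k+1+r))
              = fun r : ℕ =>
                a * (((k+r).choose k : ℝ) * x^r * hPoly (a::as) (k+r))
                + (a * (((k+r).choose (k+1) : ℝ) * x^r * hPoly (a::as) (k+r))
                  + ((k+1+r).choose (k+1) : ℝ) * x^r * hPoly as (k+1+r)) := by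
            funext r
            have h1 : k+1+r = (k+r)+1 := by omega
            rw [h1, hPoly_cons_succ, Nat.choose_succ_succ (k+r) k]
            push_cast
            ring
          have hEq : (∑' r : ℕ, ((k+1+r).choose (k+1) : ℝ) * x^r * hPoly (a::as) (k+1+r))
              = a * (∑' r : ℕ, ((k+r).choose k : ℝ) * x^r * hPoly (a::as) (k+r))
                + (a * (x * ∑' r : ℕ, ((k+1+r).choose (k+1) : ℝ) * x^r *
                      hPoly (a::as) (k+1+r))
                  + ∑' r : ℕ, ((k+1+r).choose (k+1) : ℝ) * x^r * hPoly as (k+1+r)) := by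
            conv_lhs => rw [tsum_congr (fun r => congrFun htermEq r)]
            rw [Summable.tsum_add (hgk.mul_left a) ((hd.mul_left a).add hgas),
              Summable.tsum_add (hd.mul_left a) hgas, tsum_mul_left, tsum_mul_left, hD]
          rw [ihK (a::as) hsmall, ihL hsas] at hEq
          rw [List.map_cons, List.map_cons, List.prod_cons] at hEq ⊢
          rw [hPoly_cons_succ]
          rw [div_eq_mul_inv] at hEq ⊢
          set F := ∑' r : ℕ, ((k+1+r).choose (k+1) : ℝ) * x^r * hPoly (a::as) (k+1+r)
            with hFdef
          have hy : (1 - x*a)⁻¹ * (1 - x*a) = 1 := inv_mul_cancel₀ hne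
          linear_combination (1 - x*a)⁻¹ * hEq - F * hy

lemma list_prod_range (f : ℕ → ℝ) : ∀ m : ℕ,
    ((List.range m).map f).prod = ∏ t ∈ Finset.range m, f t := by
  intro m
  induction m with
  | zero => simp
  | succ m ih => rw [List.range_succ, List.map_append, List.prod_append,
      Finset.prod_range_succ, ih]; simp

/-- Lemma 3.1. -/
theorem lemma31 (q z : ℝ) (i n k : ℕ) (hi : 1 ≤ i) (hin : i ≤ n)
    (hden1 : ∀ j : ℕ, 1 ≤ j → 1 - q ^ j ≠ 0)
    (hden2 : ∀ j : ℕ, 1 ≤ j → 1 - z * q ^ j ≠ 0)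
    (hs : Summable fun r : ℕ =>
      ((k + r).choose k : ℝ) * (z - 1) ^ r *
        hPoly (varList (fun j => q ^ j / (1 - q ^ j)) i n) (k + r)) :
    (∑' r : ℕ, ((k + r).choose k : ℝ) * (z - 1) ^ r *
        hPoly (varList (fun j => q ^ j / (1 - q ^ j)) i n) (k + r)) =
      (1 - q ^ i) * qPoch q q n * qPoch q (z * q) i /
          ((1 - z * q ^ i) * qPoch q (z * q) n * qPoch q q i) *
        hPoly (varList (fun j => q ^ j / (1 - z * q ^ j)) i n) k := by
  set x := z - 1 with hxdef
  set L := varList (fun j => q ^ j / (1 - q ^ j)) i n with hLdef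
  -- derive smallness
  have hsummf : Summable fun m : ℕ => hPoly L m * x^m := by
    have habs : Summable fun r : ℕ => |((k + r).choose k : ℝ) * x ^ r * hPoly L (k + r)| :=
      summable_abs_iff.mpr hs
    have h1 : Summable fun r : ℕ => |x ^ r * hPoly L (k + r)| := by
      apply Summable.of_nonneg_of_le (fun r => abs_nonneg _) _ habs
      intro r
      rw [abs_mul, abs_mul, abs_mul]
      have hc1 : (1:ℝ) ≤ |((k + r).choose k : ℝ)| := by
        rw [abs_of_nonneg (by positivity)]
        exact_mod_cast Nat.one_le_iff_ne_zero.mpr (Nat.choose_pos (Nat.le_add_right k r)).ne'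
      nlinarith [abs_nonneg (x^r), abs_nonneg (hPoly L (k+r)),
        mul_nonneg (abs_nonneg (x^r)) (abs_nonneg (hPoly L (k+r)))]
    have h2 : Summable fun r : ℕ => x ^ r * hPoly L (k + r) := summable_abs_iff.mp h1
    have h3 : Summable fun r : ℕ => hPoly L (r + k) * x ^ (r + k) := by
      have h4 : (fun r : ℕ => x^k * (x ^ r * hPoly L (k + r)))
          = fun r : ℕ => hPoly L (r + k) * x ^ (r + k) := by
        funext r
        rw [Nat.add_comm r k, pow_add]
        ring
      rw [← h4]
      exact h2.mul_left _
    exact (summable_nat_add_iff k).mp h3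
  have hsmall : ∀ a ∈ L, |x*a| < 1 :=
    summable_imp_small_aux L.length L le_rfl hsummf
  rw [partI k L hsmall]
  -- nonzeroness facts
  have hq : ∀ t : ℕ, t < n + 1 - i → (1 - q^(i+t) ≠ 0) ∧ (1 - z*q^(i+t) ≠ 0) := by
    intro t _
    exact ⟨hden1 (i+t) (by omega), hden2 (i+t) (by omega)⟩
  -- key pointwise identity
  have hkey : ∀ t : ℕ, t < n + 1 - i →
      1 - x * (q^(i+t) / (1 - q^(i+t))) = (1 - z*q^(i+t)) / (1 - q^(i+t)) := by
    intro t ht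
    obtain ⟨h1, h2⟩ := hq t ht
    rw [hxdef]
    field_simp
    ring
  -- the mapped list equals the z-varList
  have hmap : L.map (fun a => a / (1 - x*a)) = varList (fun j => q ^ j / (1 - z * q ^ j)) i n := by
    rw [hLdef]
    unfold varList
    rw [List.map_map]
    apply List.map_congr_left
    intro t ht
    rw [List.mem_range] at ht
    obtain ⟨h1, h2⟩ := hq t ht
    simp only [Function.comp_apply]
    rw [hkey t ht, div_div_div_comm, div_self h1, div_one]
  -- the product equals the prefactor
  have hprod : (L.map fun a => (1 - x*a)⁻¹).prod =
      (1 - q ^ i) * qPoch q q n * qPoch q (z * q) i /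
        ((1 - z * q ^ i) * qPoch q (z * q) n * qPoch q q i) := by
    have hpo1 : qPoch q q i ≠ 0 := by
      unfold qPoch
      rw [Finset.prod_ne_zero_iff]
      intro j _
      have : 1 - q * q^j = 1 - q^(j+1) := by rw [pow_succ]; ring
      rw [this]
      exact hden1 (j+1) (by omega)
    have hpo2 : qPoch q (z*q) i ≠ 0 := by
      unfold qPoch
      rw [Finset.prod_ne_zero_iff]
      intro j _
      have : 1 - z * q * q^j = 1 - z * q^(j+1) := by rw [pow_succ]; ring
      rw [this]
      exact hden2 (j+1) (by omega)
    have hP2 : ∏ t ∈ Finset.range (n-i), (1 - z*q^(i+(t+1))) ≠ 0 := by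
      rw [Finset.prod_ne_zero_iff]
      intro t _
      exact hden2 (i+(t+1)) (by omega)
    have hP1 : ∏ t ∈ Finset.range (n-i), (1 - q^(i+(t+1))) ≠ 0 := by
      rw [Finset.prod_ne_zero_iff]
      intro t _
      exact hden1 (i+(t+1)) (by omega)
    have hzi : 1 - z*q^i ≠ 0 := hden2 i hi
    -- compute qPoch splittings
    have hq1 : qPoch q q n = qPoch q q i * ∏ t ∈ Finset.range (n-i), (1 - q^(i+(t+1))) := by
      have haux : qPoch q q (i+(n-i)) = qPoch q q i * ∏ t ∈ Finset.range (n-i), (1 - q^(i+(t+1))) := by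
        unfold qPoch
        rw [Finset.prod_range_add]
        congr 1
        apply Finset.prod_congr rfl
        intro t _
        rw [show i+(t+1) = (i+t)+1 by omega, pow_succ]
        ring
      rw [← haux, show i + (n-i) = n by omega]
    have hq2 : qPoch q (z*q) n
        = qPoch q (z*q) i * ∏ t ∈ Finset.range (n-i), (1 - z*q^(i+(t+1))) := by
      have haux : qPoch q (z*q) (i+(n-i))
          = qPoch q (z*q) i * ∏ t ∈ Finset.range (n-i), (1 - z*q^(i+(t+1))) := by
        unfold qPoch
        rw [Finset.prod_range_add]
        congr 1
        apply Finset.prod_congr rfl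
        intro t _
        rw [show i+(t+1) = (i+t)+1 by omega, pow_succ]
        ring
      rw [← haux, show i + (n-i) = n by omega]
    -- compute the list product
    rw [hLdef]
    unfold varList
    rw [List.map_map, list_prod_range]
    have hcongr : ∀ t ∈ Finset.range (n+1-i),
        ((fun a => (1 - x*a)⁻¹) ∘ fun t => q^(i+t)/(1-q^(i+t))) t
          = (1 - q^(i+t)) / (1 - z*q^(i+t)) := by
      intro t ht
      rw [Finset.mem_range] at ht
      simp only [Function.comp_apply]
      rw [hkey t ht, inv_div]
    rw [Finset.prod_congr rfl hcongr, Finset.prod_div_distrib]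
    rw [show n+1-i = (n-i)+1 by omega, Finset.prod_range_succ', Finset.prod_range_succ']
    rw [Nat.add_zero, hq1, hq2]
    field_simp
  rw [hmap, hprod]
end
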